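/- (Closed-form solution of the one-time episodic optimization.) Let d ≥ 1, let Ā be a symmetric positive semidefinite d×d real matrix, let V_0 be a symmetric positive definite d×d real matrix, let m̄, m_0 ∈ ℝ^d, and let n_0 > 0. Define, for m ∈ ℝ^d and V a symmetric positive definite d×d matrix, F(m, V) = (1/2)(m − m̄)ᵀ Ā (m − m̄) + (1/2) Tr(Ā V) − (1/2) log det V + (n_0/2)(m − m_0)ᵀ V_0^{-1} (m − m_0) + (n_0/2) Tr(V V_0^{-1}). Then F attains its global minimum over all m ∈ ℝ^d and all symmetric positive definite V at the unique point m* = (Ā + n_0 V_0^{-1})^{-1} (Ā m̄ + n_0 V_0^{-1} m_0), V* = (Ā + n_0 V_0^{-1})^{-1}; that is, F(m, V) ≥ F(m*, V*) for all such (m, V), with equality if and only if (m, V) = (m*, V*). -/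

import Mathlib

/-!
STATEMENT 4 (Closed-form solution of the one-time episodic optimization).
For Ā symmetric positive semidefinite, V₀ symmetric positive definite, m̄, m₀ ∈ ℝ^d, n₀ > 0,
the objective
  F(m,V) = (1/2)(m−m̄)ᵀĀ(m−m̄) + (1/2)Tr(ĀV) − (1/2)log det V
           + (n₀/2)(m−m₀)ᵀV₀⁻¹(m−m₀) + (n₀/2)Tr(V V₀⁻¹)
attains its global minimum over m ∈ ℝ^d and symmetric positive definite V at the unique point
  m* = (Ā + n₀V₀⁻¹)⁻¹(Ā m̄ + n₀V₀⁻¹ m₀),  V* = (Ā + n₀V₀⁻¹)⁻¹,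
i.e. F(m,V) ≥ F(m*,V*) with equality iff (m,V) = (m*,V*).
-/

open Matrix Real

/-- The per-episode variational objective `F(m, V)`. -/
noncomputable def episodicObjective (d : ℕ) (Abar V0 : Matrix (Fin d) (Fin d) ℝ)
    (mbar m0 : Fin d → ℝ) (n0 : ℝ) (m : Fin d → ℝ) (V : Matrix (Fin d) (Fin d) ℝ) : ℝ :=
  (1 / 2) * ((m - mbar) ⬝ᵥ Abar.mulVec (m - mbar)) + (1 / 2) * (Abar * V).trace
    - (1 / 2) * Real.log V.det
    + (n0 / 2) * ((m - m0) ⬝ᵥ V0⁻¹.mulVec (m - m0)) + (n0 / 2) * (V * V0⁻¹).trace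

section AuxLemmas
variable {d : ℕ}

variable {d : ℕ}

lemma myPosDefSmul {c : ℝ} {M : Matrix (Fin d) (Fin d) ℝ} (hc : 0 < c) (hM : M.PosDef) :
    (c • M).PosDef := by
  refine Matrix.PosDef.of_dotProduct_mulVec_pos ?_ (fun x hx => ?_)
  · unfold Matrix.IsHermitian
    rw [conjTranspose_smul, hM.1]
    simp
  · rw [smul_mulVec, dotProduct_smul, smul_eq_mul]
    exact mul_pos hc (hM.dotProduct_mulVec_pos hx)

lemma myTraceEq {W : Matrix (Fin d) (Fin d) ℝ} (hW : W.IsHermitian) :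
    W.trace = ∑ i, hW.eigenvalues i := by
  conv_lhs => rw [hW.spectral_theorem]
  rw [Unitary.conjStarAlgAut_apply, trace_mul_comm, ← mul_assoc, Matrix.mem_unitaryGroup_iff'.mp hW.eigenvectorUnitary.2,
    one_mul, trace_diagonal]
  simp

lemma myTraceLogDet {W : Matrix (Fin d) (Fin d) ℝ} (hW : W.PosDef) :
    (d : ℝ) ≤ W.trace - Real.log W.det ∧ (W.trace - Real.log W.det = d ↔ W = 1) := by
  have hev := hW.eigenvalues_pos
  have hdet : W.det = ∏ i, hW.1.eigenvalues i := by
    simpa using hW.1.det_eq_prod_eigenvalues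
  have hlog : Real.log W.det = ∑ i, Real.log (hW.1.eigenvalues i) := by
    rw [hdet, Real.log_prod]
    exact fun i _ => (hev i).ne'
  have htr := myTraceEq hW.1
  have key : W.trace - Real.log W.det - d = ∑ i, (hW.1.eigenvalues i - Real.log (hW.1.eigenvalues i) - 1) := by
    rw [htr, hlog]
    simp [Finset.sum_sub_distrib]
  have hterm : ∀ i, 0 ≤ hW.1.eigenvalues i - Real.log (hW.1.eigenvalues i) - 1 := by
    intro i
    have := Real.log_le_sub_one_of_pos (hev i)
    linarith
  have hsum : 0 ≤ W.trace - Real.log W.det - d := by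
    rw [key]; exact Finset.sum_nonneg fun i _ => hterm i
  refine ⟨by linarith, ?_, ?_⟩
  · intro h
    have h0 : W.trace - Real.log W.det - d = 0 := by linarith
    rw [key] at h0
    have hall : ∀ i ∈ Finset.univ, hW.1.eigenvalues i - Real.log (hW.1.eigenvalues i) - 1 = 0 :=
      (Finset.sum_eq_zero_iff_of_nonneg (fun i _ => hterm i)).mp h0
    have hone : ∀ i, hW.1.eigenvalues i = 1 := by
      intro i
      by_contra hne
      have := Real.log_lt_sub_one_of_pos (hev i) hne
      have := hall i (Finset.mem_univ i)
      linarith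
    have hdiag : diagonal (RCLike.ofReal ∘ hW.1.eigenvalues) = (1 : Matrix (Fin d) (Fin d) ℝ) := by
      have he : (RCLike.ofReal ∘ hW.1.eigenvalues : Fin d → ℝ) = fun _ => 1 := by
        funext i; simp [hone i]
      rw [he, diagonal_one]
    conv_lhs => rw [hW.1.spectral_theorem]
    rw [hdiag, Unitary.conjStarAlgAut_apply, mul_one, Matrix.mem_unitaryGroup_iff.mp hW.1.eigenvectorUnitary.2]
  · intro h
    subst h
    simp [Matrix.trace_one]

lemma myBilinComm {M : Matrix (Fin d) (Fin d) ℝ} (hM : M.IsHermitian) (x y : Fin d → ℝ) :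
    x ⬝ᵥ M *ᵥ y = y ⬝ᵥ M *ᵥ x := by
  have hMt : Mᵀ = M := by
    rw [← Matrix.conjTranspose_eq_transpose_of_trivial, hM.eq]
  rw [dotProduct_mulVec, ← mulVec_transpose, hMt, dotProduct_comm]

lemma myQuadPos {M : Matrix (Fin d) (Fin d) ℝ} (hM : M.PosDef) {x : Fin d → ℝ} (hx : x ≠ 0) :
    0 < x ⬝ᵥ M *ᵥ x := by
  have := hM.dotProduct_mulVec_pos hx
  simpa using this

lemma myQuadNonneg {M : Matrix (Fin d) (Fin d) ℝ} (hM : M.PosSemidef) (x : Fin d → ℝ) :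
    0 ≤ x ⬝ᵥ M *ᵥ x := by
  have := hM.dotProduct_mulVec_nonneg x
  simpa using this

open scoped MatrixOrder in
lemma myVpart {S V : Matrix (Fin d) (Fin d) ℝ} (hS : S.PosDef) (hV : V.PosDef) :
    (d : ℝ) + Real.log S.det ≤ (S * V).trace - Real.log V.det ∧
    ((S * V).trace - Real.log V.det = (d : ℝ) + Real.log S.det ↔ V = S⁻¹) := by
  set Q := CFC.sqrt S with hQdef
  have hQps : Q.PosSemidef := Matrix.nonneg_iff_posSemidef.mp (CFC.sqrt_nonneg S)
  have hQQ : Q * Q = S := CFC.sqrt_mul_sqrt_self S hS.posSemidef.nonneg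
  have hSdet : 0 < S.det := hS.det_pos
  have hQdet : Q.det ≠ 0 := by
    intro h
    have : S.det = Q.det * Q.det := by rw [← hQQ, det_mul]
    rw [this, h] at hSdet; simp at hSdet
  have hQunit : IsUnit Q.det := hQdet.isUnit
  -- W := Q * V * Q is positive definite
  have hW : (Q * V * Q).PosDef := by
    refine Matrix.PosDef.of_dotProduct_mulVec_pos ?_ (fun x hx => ?_)
    · unfold Matrix.IsHermitian
      rw [conjTranspose_mul, conjTranspose_mul, hQps.1, hV.1.eq]
      rw [Matrix.mul_assoc]
    · have hQx : Q *ᵥ x ≠ 0 := by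
        intro h
        have hinj : Function.Injective Q.mulVec :=
          Matrix.mulVec_injective_iff_isUnit.mpr ((Matrix.isUnit_iff_isUnit_det Q).mpr hQunit)
        exact hx (hinj (by simpa using h))
      have h1 : star x ⬝ᵥ (Q * V * Q) *ᵥ x = (Q *ᵥ x) ⬝ᵥ V *ᵥ (Q *ᵥ x) := by
        simp only [star_trivial, ← mulVec_mulVec]
        rw [dotProduct_mulVec x Q, ← mulVec_transpose]
        have hQt : Qᵀ = Q := by
          rw [← Matrix.conjTranspose_eq_transpose_of_trivial, hQps.1.eq]
        rw [hQt]
      rw [h1]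
      have := hV.dotProduct_mulVec_pos hQx
      simpa using this
  have htr : (Q * V * Q).trace = (S * V).trace := by
    rw [trace_mul_cycle, hQQ]
  have hdet : (Q * V * Q).det = S.det * V.det := by
    rw [det_mul, det_mul, ← hQQ, det_mul]; ring
  have hVdet : 0 < V.det := hV.det_pos
  have hlogdet : Real.log (Q * V * Q).det = Real.log S.det + Real.log V.det := by
    rw [hdet, Real.log_mul hSdet.ne' hVdet.ne']
  obtain ⟨hineq, hiff⟩ := myTraceLogDet hW
  have hrw : (Q * V * Q).trace - Real.log (Q * V * Q).det
      = (S * V).trace - Real.log V.det - Real.log S.det := by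
    rw [htr, hlogdet]; ring
  constructor
  · rw [hrw] at hineq; linarith
  · constructor
    · intro h
      have h1 : (Q * V * Q).trace - Real.log (Q * V * Q).det = d := by
        rw [hrw, h]; ring
      have hW1 : Q * V * Q = 1 := hiff.mp h1
      have hSV : S * V = 1 := by
        have hW1' := hW1
        simp only [Matrix.mul_assoc] at hW1'
        have h2 : S * V * Q = Q := by
          rw [← hQQ]
          simp only [Matrix.mul_assoc]
          rw [hW1', Matrix.mul_one]
        have h3 : S * V * (Q * Q⁻¹) = S * V := by
          rw [Matrix.mul_nonsing_inv Q hQunit, Matrix.mul_one]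
        have h4 : S * V * (Q * Q⁻¹) = Q * Q⁻¹ := by rw [← Matrix.mul_assoc, h2]
        rw [← h3, h4, Matrix.mul_nonsing_inv Q hQunit]
      exact (Matrix.inv_eq_right_inv hSV).symm
    · intro h
      subst h
      have hSS : S * S⁻¹ = 1 := Matrix.mul_nonsing_inv S hSdet.ne'.isUnit
      have hdetinv : (S⁻¹).det = S.det⁻¹ := by
        rw [Matrix.det_nonsing_inv, Ring.inverse_eq_inv']
      rw [hSS, hdetinv, Real.log_inv, Matrix.trace_one]
      simp

lemma myMpart {A B : Matrix (Fin d) (Fin d) ℝ} (hA : A.IsHermitian) (hB : B.IsHermitian)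
    {n0 : ℝ} (mbar m0 μ : Fin d → ℝ)
    (hcross : A *ᵥ (μ - mbar) + n0 • (B *ᵥ (μ - m0)) = 0) (m : Fin d → ℝ) :
    (m - mbar) ⬝ᵥ A *ᵥ (m - mbar) + n0 * ((m - m0) ⬝ᵥ B *ᵥ (m - m0))
      = (μ - mbar) ⬝ᵥ A *ᵥ (μ - mbar) + n0 * ((μ - m0) ⬝ᵥ B *ᵥ (μ - m0))
        + ((m - μ) ⬝ᵥ (A + n0 • B) *ᵥ (m - μ)) := by
  have hu : m - mbar = (m - μ) + (μ - mbar) := (sub_add_sub_cancel m μ mbar).symm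
  have hv : m - m0 = (m - μ) + (μ - m0) := (sub_add_sub_cancel m μ m0).symm
  have hzero : (m - μ) ⬝ᵥ (A *ᵥ (μ - mbar)) + n0 * ((m - μ) ⬝ᵥ (B *ᵥ (μ - m0))) = 0 := by
    have h := congrArg (fun w => (m - μ) ⬝ᵥ w) hcross
    simpa [dotProduct_add, dotProduct_smul, smul_eq_mul] using h
  rw [hu, hv]
  simp only [add_dotProduct, mulVec_add, dotProduct_add, add_mulVec, smul_mulVec,
    dotProduct_smul, smul_eq_mul,
    myBilinComm hA (μ - mbar) (m - μ), myBilinComm hB (μ - m0) (m - μ)]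
  linear_combination 2 * hzero

end AuxLemmas

theorem one_time_episodic_optimization_closed_form
    (d : ℕ) (hd : 1 ≤ d)
    (Abar : Matrix (Fin d) (Fin d) ℝ) (hAbar : Abar.PosSemidef)
    (V0 : Matrix (Fin d) (Fin d) ℝ) (hV0 : V0.PosDef)
    (mbar m0 : Fin d → ℝ) (n0 : ℝ) (hn0 : 0 < n0) :
    ((Abar + n0 • V0⁻¹)⁻¹).PosDef ∧
    (∀ (m : Fin d → ℝ) (V : Matrix (Fin d) (Fin d) ℝ), V.PosDef →
      episodicObjective d Abar V0 mbar m0 n0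
          ((Abar + n0 • V0⁻¹)⁻¹.mulVec (Abar.mulVec mbar + n0 • V0⁻¹.mulVec m0))
          (Abar + n0 • V0⁻¹)⁻¹
        ≤ episodicObjective d Abar V0 mbar m0 n0 m V) ∧
    (∀ (m : Fin d → ℝ) (V : Matrix (Fin d) (Fin d) ℝ), V.PosDef →
      (episodicObjective d Abar V0 mbar m0 n0 m V
          = episodicObjective d Abar V0 mbar m0 n0
              ((Abar + n0 • V0⁻¹)⁻¹.mulVec (Abar.mulVec mbar + n0 • V0⁻¹.mulVec m0))
              (Abar + n0 • V0⁻¹)⁻¹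
        ↔ m = (Abar + n0 • V0⁻¹)⁻¹.mulVec (Abar.mulVec mbar + n0 • V0⁻¹.mulVec m0)
            ∧ V = (Abar + n0 • V0⁻¹)⁻¹)) := by
  have hV0inv : (V0⁻¹).PosDef := hV0.inv
  set S : Matrix (Fin d) (Fin d) ℝ := Abar + n0 • V0⁻¹ with hSdef
  have hS : S.PosDef := Matrix.PosDef.posSemidef_add hAbar (myPosDefSmul hn0 hV0inv)
  have hSinv : (S⁻¹).PosDef := hS.inv
  have hSunit : IsUnit S.det := hS.det_pos.ne'.isUnit
  set b : Fin d → ℝ := Abar.mulVec mbar + n0 • V0⁻¹.mulVec m0 with hbdef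
  set μ : Fin d → ℝ := S⁻¹.mulVec b with hμdef
  have hSμ : S *ᵥ μ = b := by
    rw [hμdef, mulVec_mulVec, Matrix.mul_nonsing_inv S hSunit, one_mulVec]
  have h5 : Abar *ᵥ μ + n0 • (V0⁻¹ *ᵥ μ) = b := by
    rw [← smul_mulVec, ← add_mulVec, ← hSdef, hSμ]
  have hcross : Abar *ᵥ (μ - mbar) + n0 • (V0⁻¹ *ᵥ (μ - m0)) = 0 := by
    rw [mulVec_sub, mulVec_sub, smul_sub]
    have hre : (Abar *ᵥ μ - Abar *ᵥ mbar) + (n0 • (V0⁻¹ *ᵥ μ) - n0 • (V0⁻¹ *ᵥ m0))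
        = (Abar *ᵥ μ + n0 • (V0⁻¹ *ᵥ μ)) - (Abar *ᵥ mbar + n0 • (V0⁻¹ *ᵥ m0)) := by abel
    rw [hre, h5, hbdef]
    exact sub_self _
  have hmq := myMpart hAbar.1 hV0inv.1 mbar m0 μ hcross
  -- trace identity
  have htraceId : ∀ V : Matrix (Fin d) (Fin d) ℝ,
      (S * V).trace = (Abar * V).trace + n0 * (V * V0⁻¹).trace := by
    intro V
    rw [hSdef, add_mul, trace_add, smul_mul, trace_smul, trace_mul_comm V0⁻¹ V, smul_eq_mul]
  -- rewriting of F
  have hFrw : ∀ (m : Fin d → ℝ) (V : Matrix (Fin d) (Fin d) ℝ),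
      episodicObjective d Abar V0 mbar m0 n0 m V
        = (1/2) * ((m - mbar) ⬝ᵥ Abar *ᵥ (m - mbar) + n0 * ((m - m0) ⬝ᵥ V0⁻¹ *ᵥ (m - m0)))
          + (1/2) * ((S * V).trace - Real.log V.det) := by
    intro m V
    unfold episodicObjective
    rw [htraceId V]
    ring
  have hSopt : (S * S⁻¹).trace - Real.log (S⁻¹).det = (d : ℝ) + Real.log S.det := by
    rw [Matrix.mul_nonsing_inv S hSunit, Matrix.trace_one]
    have : (S⁻¹).det = S.det⁻¹ := by rw [Matrix.det_nonsing_inv, Ring.inverse_eq_inv']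
    rw [this, Real.log_inv]
    simp
  refine ⟨hSinv, ?_, ?_⟩
  · intro m V hV
    obtain ⟨hVineq, -⟩ := myVpart hS hV
    have ha := myQuadNonneg hS.posSemidef (m - μ)
    rw [hFrw m V, hFrw μ S⁻¹, hSopt, hmq m]
    linarith
  · intro m V hV
    obtain ⟨hVineq, hViff⟩ := myVpart hS hV
    have ha := myQuadNonneg hS.posSemidef (m - μ)
    constructor
    · intro heq
      rw [hFrw m V, hFrw μ S⁻¹, hSopt, hmq m] at heq
      have haz : (m - μ) ⬝ᵥ S *ᵥ (m - μ) = 0 := by linarith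
      have hbz : (S * V).trace - Real.log V.det = (d : ℝ) + Real.log S.det := by linarith
      constructor
      · by_contra hne
        have : m - μ ≠ 0 := sub_ne_zero.mpr hne
        have := myQuadPos hS this
        linarith
      · exact hViff.mp hbz
    · rintro ⟨rfl, rfl⟩
      rfl
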